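/- Let S be a left CP-semiring and I a left ideal of S (I : Ideal S, i.e., an S-submodule of S). Then there exists an element e ∈ S with e * e = e such that 1 is Bourne-congruent to e modulo I (i.e., there exist x, y ∈ I with 1 + x = e + y) and a * e = 0 for every a ∈ I. -/
import Mathlib

universe u

/-- A left CP-semiring: every cyclic left `S`-semimodule is projective. -/
def IsLeftCPSemiring (S : Type u) [Semiring S] : Prop :=
  ∀ (M : Type u) [AddCommMonoid M] [Module S M],
    (∃ m : M, Submodule.span S {m} = ⊤) → Module.Projective S M

namespace CPAux

variable {S : Type u} [Semiring S]

/-- The Bourne congruence of a left ideal. -/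
def bourne (I : Ideal S) : AddCon S where
  r a b := ∃ x ∈ I, ∃ y ∈ I, a + x = b + y
  iseqv := by
    constructor
    · intro a; exact ⟨0, I.zero_mem, 0, I.zero_mem, rfl⟩
    · rintro a b ⟨x, hx, y, hy, h⟩; exact ⟨y, hy, x, hx, h.symm⟩
    · rintro a b c ⟨x, hx, y, hy, h⟩ ⟨u, hu, v, hv, h'⟩
      refine ⟨x + u, I.add_mem hx hu, v + y, I.add_mem hv hy, ?_⟩
      calc a + (x + u) = (a + x) + u := (add_assoc _ _ _).symm
        _ = (b + y) + u := by rw [h]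
        _ = (b + u) + y := add_right_comm _ _ _
        _ = (c + v) + y := by rw [h']
        _ = c + (v + y) := add_assoc _ _ _
  add' := by
    rintro a b c d ⟨x, hx, y, hy, h⟩ ⟨u, hu, v, hv, h'⟩
    refine ⟨x + u, I.add_mem hx hu, y + v, I.add_mem hy hv, ?_⟩
    calc a + c + (x + u) = (a + x) + (c + u) := by rw [add_add_add_comm]
      _ = (b + y) + (d + v) := by rw [h, h']
      _ = b + d + (y + v) := by rw [add_add_add_comm]

instance (I : Ideal S) : SMul S (bourne I).Quotient where
  smul s := AddCon.lift _ ((bourne I).mk'.comp (AddMonoidHom.mulLeft s))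
    (by
      rintro a b ⟨x, hx, y, hy, h⟩
      simp only [AddCon.ker_rel, AddMonoidHom.comp_apply, AddMonoidHom.coe_mulLeft]
      exact (AddCon.eq _).2 ⟨s * x, I.smul_mem s hx, s * y, I.smul_mem s hy, by
        rw [← mul_add, ← mul_add, h]⟩)

theorem smul_mk (I : Ideal S) (s a : S) :
    s • ((a : (bourne I).Quotient)) = ((s * a : S) : (bourne I).Quotient) := rfl

instance (I : Ideal S) : Module S (bourne I).Quotient where
  one_smul m := by
    induction m using AddCon.induction_on with
    | H a => rw [smul_mk, one_mul]
  mul_smul s t m := by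
    induction m using AddCon.induction_on with
    | H a => rw [smul_mk, smul_mk, smul_mk, mul_assoc]
  smul_zero s := by
    show s • ((0 : S) : (bourne I).Quotient) = ((0 : S) : (bourne I).Quotient)
    rw [smul_mk, mul_zero]
  smul_add s m n := by
    induction m using AddCon.induction_on with
    | H a =>
      induction n using AddCon.induction_on with
      | H b =>
        show s • ((a + b : S) : (bourne I).Quotient) = _
        rw [smul_mk, smul_mk, smul_mk, mul_add]
        rfl
  add_smul s t m := by
    induction m using AddCon.induction_on with
    | H a =>
      rw [smul_mk, smul_mk, smul_mk, add_mul]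
      rfl
  zero_smul m := by
    induction m using AddCon.induction_on with
    | H a =>
      show _ = ((0 : S) : (bourne I).Quotient)
      rw [smul_mk, zero_mul]

/-- The quotient map as a linear map. -/
def π (I : Ideal S) : S →ₗ[S] (bourne I).Quotient where
  toFun a := a
  map_add' a b := by exact ((bourne I).mk'.map_add a b)
  map_smul' s a := by rw [smul_mk]; rfl

theorem π_surjective (I : Ideal S) : Function.Surjective (π I) :=
  fun m => AddCon.induction_on m (fun a => ⟨a, rfl⟩)

theorem span_one (I : Ideal S) :
    Submodule.span S {((1 : S) : (bourne I).Quotient)} = ⊤ := by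
  rw [eq_top_iff]
  intro m _
  induction m using AddCon.induction_on with
  | H a =>
    have : (a : (bourne I).Quotient) = a • ((1 : S) : (bourne I).Quotient) := by
      rw [smul_mk, mul_one]
    rw [this]
    exact Submodule.smul_mem _ _ (Submodule.mem_span_singleton_self _)

end CPAux

/-- for any left ideal `I` of a left CP-semiring `S`, there is an
idempotent `e` which is Bourne-congruent to `1` modulo `I` and with `a * e = 0`
for every `a ∈ I`. -/
theorem exists_idempotent_bourne_congruent_one
    {S : Type u} [Semiring S] (hS : IsLeftCPSemiring S) (I : Ideal S) :
    ∃ e : S, e * e = e ∧ (∃ x ∈ I, ∃ y ∈ I, 1 + x = e + y) ∧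
      ∀ a ∈ I, a * e = 0 := by
  classical
  have hproj : Module.Projective S (CPAux.bourne I).Quotient :=
    hS _ ⟨_, CPAux.span_one I⟩
  obtain ⟨h, hh⟩ := Module.projective_lifting_property (CPAux.π I) LinearMap.id
    (CPAux.π_surjective I)
  -- hh : (π I).comp h = id
  set e := h ((1 : S) : (CPAux.bourne I).Quotient) with he
  have key : ∀ s : S, h ((s : (CPAux.bourne I).Quotient)) = s * e := by
    intro s
    have : ((s : (CPAux.bourne I).Quotient)) = s • ((1 : S) : (CPAux.bourne I).Quotient) := by
      rw [CPAux.smul_mk, mul_one]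
    rw [this, map_smul, smul_eq_mul, he]
  have hπh : ∀ m, CPAux.π I (h m) = m := fun m => DFunLike.congr_fun hh m
  have hπe : CPAux.π I e = ((1 : S) : (CPAux.bourne I).Quotient) := hπh _
  refine ⟨e, ?_, ?_, ?_⟩
  · -- e * e = e
    have := key e
    rw [show ((e : S) : (CPAux.bourne I).Quotient) = CPAux.π I e from rfl, hπe] at this
    exact this.symm.trans he.symm
  · -- 1 + x = e + y
    have : ((e : S) : (CPAux.bourne I).Quotient) = ((1 : S) : (CPAux.bourne I).Quotient) := hπe
    obtain ⟨x, hx, y, hy, hxy⟩ := (AddCon.eq _).1 this.symm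
    exact ⟨x, hx, y, hy, hxy⟩
  · intro a ha
    have h1 : ((a : (CPAux.bourne I).Quotient)) = ((0 : S) : (CPAux.bourne I).Quotient) :=
      (AddCon.eq _).2 ⟨0, I.zero_mem, a, ha, by rw [add_zero, zero_add]⟩
    have := key a
    rw [h1] at this
    have h0 : ((0 : S) : (CPAux.bourne I).Quotient) = (0 : (CPAux.bourne I).Quotient) := rfl
    rw [h0, map_zero] at this
    exact this.symm
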